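/- Suppose every vertical segment {x₁}×[0,1] with x₁ ∈ [0,1] intersects at least two rectangles R_u with u ∈ J^ñ. Then for every x₁ ∈ [0,1], the set ({x₁}×[0,1]) ∩ E has diameter at least δ·s_*^{ñ-1}, where δ is the minimal distance between distinct rectangles R_i, R_j (i ≠ j) and s_* = min_j s_j. -/

import Mathlib

section Aux

variable {m : ℕ} (f : Fin m → ℝ × ℝ → ℝ × ℝ)

/-- iterated image set along a word -/
def Rc (S : Set (ℝ × ℝ)) (l : List (Fin m)) : Set (ℝ × ℝ) :=
  l.foldr (fun j T => f j '' T) S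

/-- iterated map along a word -/
def Fc (l : List (Fin m)) (x : ℝ × ℝ) : ℝ × ℝ := l.foldr f x

lemma Fc_nil (x : ℝ × ℝ) : Fc f [] x = x := rfl

lemma Fc_cons (j : Fin m) (l : List (Fin m)) (x : ℝ × ℝ) :
    Fc f (j :: l) x = f j (Fc f l x) := rfl

lemma Rc_nil (S : Set (ℝ × ℝ)) : Rc f S [] = S := rfl

lemma Rc_cons (S : Set (ℝ × ℝ)) (j : Fin m) (l : List (Fin m)) :
    Rc f S (j :: l) = f j '' Rc f S l := rfl

lemma Rc_eq_image (S : Set (ℝ × ℝ)) (l : List (Fin m)) :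
    Rc f S l = Fc f l '' S := by
  induction l with
  | nil => simp [Rc, Fc]; exact (Set.image_id S).symm
  | cons j t ih =>
    rw [Rc_cons, ih, Set.image_image]
    rfl

lemma Fc_append (l l' : List (Fin m)) (x : ℝ × ℝ) :
    Fc f (l ++ l') x = Fc f l (Fc f l' x) := by
  simp [Fc, List.foldr_append]

lemma Rc_append (S : Set (ℝ × ℝ)) (l l' : List (Fin m)) :
    Rc f S (l ++ l') = Fc f l '' Rc f S l' := by
  show List.foldr _ S (l ++ l') = _
  rw [List.foldr_append]
  exact Rc_eq_image f (Rc f S l') l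

end Aux

lemma exists_seq_aux {α : Type*} [Nonempty α] (P : α → Prop) (R : α → α → Prop) (x0 : α)
    (h0 : P x0) (step : ∀ x, P x → ∃ y, P y ∧ R x y) :
    ∃ g : ℕ → α, g 0 = x0 ∧ (∀ n, P (g n)) ∧ ∀ n, R (g n) (g (n + 1)) := by
  choose! F hF1 hF2 using step
  have hP : ∀ n, P (F^[n] x0) := by
    intro n
    induction n with
    | zero => exact h0
    | succ n ih => rw [Function.iterate_succ_apply']; exact hF1 _ ih
  refine ⟨fun n => F^[n] x0, rfl, hP, fun n => ?_⟩
  show R (F^[n] x0) (F^[n + 1] x0)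
  rw [Function.iterate_succ_apply']
  exact hF2 _ (hP n)

lemma list_split_aux {α : Type*} : ∀ (lu lv : List α), lu.length = lv.length → lu ≠ lv →
    ∃ w i j tu tv, i ≠ j ∧ lu = w ++ i :: tu ∧ lv = w ++ j :: tv ∧ w.length < lu.length := by
  intro lu
  induction lu with
  | nil =>
    intro lv h hne
    cases lv with
    | nil => exact absurd rfl hne
    | cons y tv => simp at h
  | cons x tu' ih =>
    intro lv h hne
    cases lv with
    | nil => simp at h
    | cons y tv' =>
      by_cases hxy : x = y
      · subst hxy
        have hlen : tu'.length = tv'.length := by simpa using h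
        have htne : tu' ≠ tv' := by intro he; exact hne (by rw [he])
        obtain ⟨w, i, j, tu, tv, hij, hu2, hv2, hwl⟩ := ih tv' hlen htne
        refine ⟨x :: w, i, j, tu, tv, hij, by rw [hu2]; rfl, by rw [hv2]; rfl, ?_⟩
        simp only [List.length_cons]
        omega
      · exact ⟨[], x, y, tu', tv', hxy, rfl, rfl, by simp⟩

/-- under the vertical-segment condition at level `ñ`, every
vertical section of `E` has diameter at least `δ · s_*^(ñ-1)`. -/
theorem stmt2 (m : ℕ) (hm : 0 < m)
    (r s a b : Fin m → ℝ)
    (hs : ∀ j, 0 < s j) (hsr : ∀ j, s j < r j) (hr1 : ∀ j, r j < 1)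
    (f : Fin m → ℝ × ℝ → ℝ × ℝ)
    (hf : ∀ j x, f j x = (r j * x.1 + a j, s j * x.2 + b j))
    (Q : Set (ℝ × ℝ)) (hQ : Q = Set.Icc (0, 0) (1, 1))
    (hRQ : ∀ j, f j '' Q ⊆ Q)
    (hdisj : ∀ i j, i ≠ j → Disjoint (f i '' Q) (f j '' Q))
    (E : Set (ℝ × ℝ)) (hEc : IsCompact E) (hEne : E.Nonempty)
    (hEQ : E ⊆ Q) (hE : E = ⋃ j, f j '' E)
    -- δ is the minimal distance between distinct rectangles R_i, R_j
    (δ : ℝ)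
    (hδ : IsLeast {d : ℝ | ∃ i j, i ≠ j ∧ ∃ x ∈ f i '' Q, ∃ y ∈ f j '' Q,
      d = dist x y} δ)
    -- s_* = min_j s_j
    (sstar : ℝ) (hsstar : IsLeast (Set.range s) sstar)
    -- vertical segment condition at level ñ
    (nt : ℕ) (hnt : 1 ≤ nt)
    (hvert : ∀ x₁ ∈ Set.Icc (0:ℝ) 1, ∃ u v : Fin nt → Fin m, u ≠ v ∧
      ((List.ofFn u).foldr (fun j S => f j '' S) Q ∩
        ({x₁} ×ˢ Set.Icc (0:ℝ) 1)).Nonempty ∧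
      ((List.ofFn v).foldr (fun j S => f j '' S) Q ∩
        ({x₁} ×ˢ Set.Icc (0:ℝ) 1)).Nonempty) :
    ∀ x₁ ∈ Set.Icc (0:ℝ) 1,
      δ * sstar ^ (nt - 1) ≤ Metric.diam (({x₁} ×ˢ Set.Icc (0:ℝ) 1) ∩ E) := by
  have hrpos : ∀ j, 0 < r j := fun j => (hs j).trans (hsr j)
  haveI : Nonempty (Fin m) := ⟨⟨0, hm⟩⟩
  obtain ⟨jm, hjm⟩ := Finite.exists_max r
  set ρ := r jm with hρdef
  have hρpos : 0 < ρ := hrpos jm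
  have hρlt1 : ρ < 1 := hr1 jm
  obtain ⟨j₀, hj₀⟩ := hsstar.1
  have hspos : 0 < sstar := hj₀ ▸ hs j₀
  have hsle : ∀ j, sstar ≤ s j := fun j => hsstar.2 ⟨j, rfl⟩
  have hslt1 : sstar < 1 := by rw [← hj₀]; exact (hsr j₀).trans (hr1 j₀)
  have hfc : ∀ j, Continuous (f j) := by
    intro j
    have : f j = fun x : ℝ × ℝ => (r j * x.1 + a j, s j * x.2 + b j) := funext (hf j)
    rw [this]; fun_prop
  have hQmem : ∀ x : ℝ × ℝ, x ∈ Q ↔ (0 ≤ x.1 ∧ x.1 ≤ 1) ∧ (0 ≤ x.2 ∧ x.2 ≤ 1) := by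
    intro x
    rw [hQ]
    simp [Set.mem_Icc, Prod.le_def]
    tauto
  have hfQ : ∀ j, ∀ x ∈ Q, f j x ∈ Q := fun j x hx => hRQ j ⟨x, hx, rfl⟩
  have hfE : ∀ j, ∀ x ∈ E, f j x ∈ E := by
    intro j x hx
    have h1 : f j x ∈ ⋃ j, f j '' E := Set.mem_iUnion.mpr ⟨j, x, hx, rfl⟩
    rwa [← hE] at h1
  have hFQ : ∀ l, ∀ x ∈ Q, Fc f l x ∈ Q := by
    intro l
    induction l with
    | nil => intro x hx; exact hx
    | cons j t ih => intro x hx; exact hfQ j _ (ih x hx)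
  have hFE : ∀ l, ∀ x ∈ E, Fc f l x ∈ E := by
    intro l
    induction l with
    | nil => intro x hx; exact hx
    | cons j t ih => intro x hx; exact hfE j _ (ih x hx)
  have hfst : ∀ l (x y : ℝ × ℝ), x.1 = y.1 → (Fc f l x).1 = (Fc f l y).1 := by
    intro l
    induction l with
    | nil => intro x y h; exact h
    | cons j t ih =>
      intro x y h
      rw [Fc_cons, Fc_cons, hf, hf]
      dsimp only
      rw [ih x y h]
  have hRc_sub_Q : ∀ l, Rc f Q l ⊆ Q := by
    intro l
    rw [Rc_eq_image]
    rintro x ⟨y, hy, rfl⟩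
    exact hFQ l y hy
  have hRcc : ∀ l, IsCompact (Rc f Q l) := by
    intro l
    induction l with
    | nil => rw [Rc_nil, hQ]; exact isCompact_Icc
    | cons j t ih => rw [Rc_cons]; exact ih.image (hfc j)
  have hd1 : ∀ j (p q : ℝ × ℝ), dist (f j p) (f j q) ≤ r j * dist p q ∧
      s j * dist p q ≤ dist (f j p) (f j q) := by
    intro j p q
    rw [hf j p, hf j q]
    simp only [Prod.dist_eq, Real.dist_eq]
    rw [show r j * p.1 + a j - (r j * q.1 + a j) = r j * (p.1 - q.1) from by ring,
      show s j * p.2 + b j - (s j * q.2 + b j) = s j * (p.2 - q.2) from by ring,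
      abs_mul, abs_mul, abs_of_pos (hrpos j), abs_of_pos (hs j)]
    constructor
    · apply max_le
      · exact mul_le_mul_of_nonneg_left (le_max_left _ _) (hrpos j).le
      · calc s j * |p.2 - q.2| ≤ r j * |p.2 - q.2| :=
              mul_le_mul_of_nonneg_right (hsr j).le (abs_nonneg _)
          _ ≤ r j * max |p.1 - q.1| |p.2 - q.2| :=
              mul_le_mul_of_nonneg_left (le_max_right _ _) (hrpos j).le
    · rw [mul_max_of_nonneg _ _ (hs j).le]
      exact max_le_max (mul_le_mul_of_nonneg_right (hsr j).le (abs_nonneg _)) le_rfl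
  have hFd : ∀ l (p q : ℝ × ℝ), sstar ^ l.length * dist p q ≤ dist (Fc f l p) (Fc f l q) ∧
      dist (Fc f l p) (Fc f l q) ≤ ρ ^ l.length * dist p q := by
    intro l
    induction l with
    | nil => intro p q; simp [Fc_nil]
    | cons j t ih =>
      intro p q
      rw [Fc_cons, Fc_cons, List.length_cons]
      obtain ⟨ih1, ih2⟩ := ih p q
      obtain ⟨hup, hlo⟩ := hd1 j (Fc f t p) (Fc f t q)
      constructor
      · calc sstar ^ (t.length + 1) * dist p q
            = sstar * (sstar ^ t.length * dist p q) := by ring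
          _ ≤ sstar * dist (Fc f t p) (Fc f t q) :=
              mul_le_mul_of_nonneg_left ih1 hspos.le
          _ ≤ s j * dist (Fc f t p) (Fc f t q) :=
              mul_le_mul_of_nonneg_right (hsle j) dist_nonneg
          _ ≤ dist (f j (Fc f t p)) (f j (Fc f t q)) := hlo
      · calc dist (f j (Fc f t p)) (f j (Fc f t q))
            ≤ r j * dist (Fc f t p) (Fc f t q) := hup
          _ ≤ ρ * (ρ ^ t.length * dist p q) :=
              mul_le_mul (hjm j) ih2 dist_nonneg hρpos.le
          _ = ρ ^ (t.length + 1) * dist p q := by ring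
  have hQdiam : ∀ p ∈ Q, ∀ q ∈ Q, dist p q ≤ 1 := by
    intro p hp q hq
    obtain ⟨⟨h1, h2⟩, h3, h4⟩ := (hQmem p).1 hp
    obtain ⟨⟨h5, h6⟩, h7, h8⟩ := (hQmem q).1 hq
    rw [Prod.dist_eq]
    apply max_le <;> rw [Real.dist_eq, abs_le] <;> constructor <;> linarith
  intro x₁ hx₁
  set L : Set (ℝ × ℝ) := {x₁} ×ˢ Set.Icc (0:ℝ) 1 with hLdef
  have hLclosed : IsClosed L := isClosed_singleton.prod isClosed_Icc
  have hLmem : ∀ z : ℝ × ℝ, z ∈ L ↔ z.1 = x₁ ∧ (0 ≤ z.2 ∧ z.2 ≤ 1) := by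
    intro z
    rw [hLdef, Set.mem_prod, Set.mem_singleton_iff, Set.mem_Icc]
  -- main step: a word whose rectangle meets L can be extended by nt letters
  have hstep : ∀ l : List (Fin m), (Rc f Q l ∩ L).Nonempty →
      ∃ t : Fin nt → Fin m, (Rc f Q (l ++ List.ofFn t) ∩ L).Nonempty := by
    rintro l ⟨p, hpR, hpL⟩
    rw [Rc_eq_image] at hpR
    obtain ⟨q, hqQ, rfl⟩ := hpR
    have hq1 : q.1 ∈ Set.Icc (0:ℝ) 1 := Set.mem_Icc.mpr ((hQmem q).1 hqQ).1
    obtain ⟨u, v, _, ⟨z, hz1, hz2⟩, _⟩ := hvert q.1 hq1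
    have hzq : z.1 = q.1 := hz2.1
    have hzR : z ∈ Rc f Q (List.ofFn u) := hz1
    refine ⟨u, Fc f l z, ?_, ?_⟩
    · rw [Rc_append]
      exact ⟨z, hzR, rfl⟩
    · refine (hLmem _).mpr ⟨?_, ?_⟩
      · rw [hfst l z q hzq]
        exact ((hLmem _).mp hpL).1
      · exact ((hQmem _).1 (hFQ l z (hRc_sub_Q _ hzR))).2
  -- Lemma A: if a rectangle meets L then E meets L inside that rectangle
  have hA : ∀ l : List (Fin m), (Rc f Q l ∩ L).Nonempty →
      ∃ p, p ∈ E ∧ p ∈ Rc f Q l ∧ p ∈ L := by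
    intro l hl
    obtain ⟨g, hg0, hgP, hgR⟩ := exists_seq_aux
      (fun l' : List (Fin m) => (Rc f Q l' ∩ L).Nonempty)
      (fun l1 l2 => ∃ t : Fin nt → Fin m, l2 = l1 ++ List.ofFn t) l hl
      (fun x hx => by
        obtain ⟨t, ht⟩ := hstep x hx
        exact ⟨x ++ List.ofFn t, ht, t, rfl⟩)
    have hglen : ∀ n, n ≤ (g n).length := by
      intro n
      induction n with
      | zero => exact Nat.zero_le _
      | succ n ih =>
        obtain ⟨t, ht⟩ := hgR n
        rw [ht, List.length_append, List.length_ofFn]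
        omega
    have hKdec : ∀ n, Rc f Q (g (n + 1)) ∩ L ⊆ Rc f Q (g n) ∩ L := by
      intro n
      obtain ⟨t, ht⟩ := hgR n
      have hsub : Rc f Q (g (n + 1)) ⊆ Rc f Q (g n) := by
        rw [ht, Rc_append, Rc_eq_image f Q (g n)]
        exact Set.image_mono (hRc_sub_Q _)
      exact fun x hx => ⟨hsub hx.1, hx.2⟩
    obtain ⟨p, hp⟩ := IsCompact.nonempty_iInter_of_sequence_nonempty_isCompact_isClosed
      (fun n => Rc f Q (g n) ∩ L) hKdec hgP ((hRcc _).inter_right hLclosed)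
      (fun n => (hRcc _).isClosed.inter hLclosed)
    have hpn : ∀ n, p ∈ Rc f Q (g n) ∩ L := by
      intro n
      exact Set.mem_iInter.mp hp n
    obtain ⟨e₀, he₀⟩ := hEne
    have hpE : p ∈ E := by
      rw [← hEc.isClosed.closure_eq, Metric.mem_closure_iff]
      intro ε hε
      obtain ⟨n, hn⟩ := exists_pow_lt_of_lt_one hε hρlt1
      refine ⟨Fc f (g n) e₀, hFE _ _ he₀, ?_⟩
      have hpRn := (hpn n).1
      rw [Rc_eq_image] at hpRn
      obtain ⟨pq, hpqQ, hpe⟩ := hpRn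
      calc dist p (Fc f (g n) e₀) = dist (Fc f (g n) pq) (Fc f (g n) e₀) := by rw [hpe]
        _ ≤ ρ ^ (g n).length * dist pq e₀ := (hFd _ _ _).2
        _ ≤ ρ ^ (g n).length * 1 :=
            mul_le_mul_of_nonneg_left (hQdiam pq hpqQ e₀ (hEQ he₀)) (pow_nonneg hρpos.le _)
        _ = ρ ^ (g n).length := mul_one _
        _ ≤ ρ ^ n := pow_le_pow_of_le_one hρpos.le hρlt1.le (hglen n)
        _ < ε := hn
    refine ⟨p, hpE, ?_, (hpn 0).2⟩
    have := (hpn 0).1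
    rwa [hg0] at this
  -- now the main argument
  obtain ⟨u, v, huv, hu, hv⟩ := hvert x₁ hx₁
  have hu' : (Rc f Q (List.ofFn u) ∩ L).Nonempty := hu
  have hv' : (Rc f Q (List.ofFn v) ∩ L).Nonempty := hv
  obtain ⟨p, hpE, hpu, hpL⟩ := hA (List.ofFn u) hu'
  obtain ⟨q, hqE, hqv, hqL⟩ := hA (List.ofFn v) hv'
  have hofne : List.ofFn u ≠ List.ofFn v := by
    intro h
    exact huv (by rwa [List.ofFn_inj] at h)
  obtain ⟨w, i, j, tu, tv, hij, hwu, hwv, hwlen⟩ :=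
    list_split_aux (List.ofFn u) (List.ofFn v) (by simp) hofne
  have hwlen' : w.length ≤ nt - 1 := by
    rw [List.length_ofFn] at hwlen
    omega
  have hsplit : ∀ (k : Fin m) (t : List (Fin m)),
      Rc f Q (w ++ k :: t) ⊆ Fc f w '' (f k '' Q) := by
    intro k t
    have heq : w ++ k :: t = (w ++ [k]) ++ t := by simp
    rw [heq, Rc_append]
    rintro x ⟨y, hy, rfl⟩
    refine ⟨f k y, ⟨y, hRc_sub_Q t hy, rfl⟩, ?_⟩
    rw [Fc_append]
    rfl
  have hpu' : p ∈ Fc f w '' (f i '' Q) := hsplit i tu (hwu ▸ hpu)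
  have hqv' : q ∈ Fc f w '' (f j '' Q) := hsplit j tv (hwv ▸ hqv)
  obtain ⟨p', hp'm, hpe⟩ := hpu'
  obtain ⟨q', hq'm, hqe⟩ := hqv'
  have hδp : δ ≤ dist p' q' := hδ.2 ⟨i, j, hij, p', hp'm, q', hq'm, rfl⟩
  have hδ0 : 0 ≤ δ := by
    obtain ⟨i₁, j₁, _, x, _, y, _, hd⟩ := hδ.1
    rw [hd]
    exact dist_nonneg
  have key : δ * sstar ^ (nt - 1) ≤ dist p q := by
    calc δ * sstar ^ (nt - 1) ≤ δ * sstar ^ w.length :=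
          mul_le_mul_of_nonneg_left (pow_le_pow_of_le_one hspos.le hslt1.le hwlen') hδ0
      _ ≤ dist p' q' * sstar ^ w.length :=
          mul_le_mul_of_nonneg_right hδp (pow_nonneg hspos.le _)
      _ = sstar ^ w.length * dist p' q' := mul_comm _ _
      _ ≤ dist (Fc f w p') (Fc f w q') := (hFd _ _ _).1
      _ = dist p q := by rw [hpe, hqe]
  have hbd : Bornology.IsBounded (({x₁} ×ˢ Set.Icc (0:ℝ) 1) ∩ E) :=
    hEc.isBounded.subset Set.inter_subset_right
  exact key.trans (Metric.dist_le_diam_of_mem hbd ⟨hpL, hpE⟩ ⟨hqL, hqE⟩)
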